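/- The Waring rank of the monomial x₁x₂⋯x_N (the C^N Z gate Hamiltonian) equals 2^{N−1}: x₁⋯x_N can be written as a linear combination of N-th powers of 2^{N−1} linear forms (1/(2^{N−1} N!)) Σ_{ε ∈ {±1}^{N−1}} (∏ε_j)(x₁ + ε₁x₂ + ⋯ + ε_{N−1}x_N)^N, and no decomposition with fewer powers exists. -/

import Mathlib

open MvPolynomial Finset

private lemma coeff_prod_X' {m : ℕ} (α : Fin m →₀ ℕ) :
    coeff α (∏ i : Fin m, (X i : MvPolynomial (Fin m) ℝ)) =
      if ⇑α = (fun _ => 1) then 1 else 0 := by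
  have hU : (∏ i : Fin m, (X i : MvPolynomial (Fin m) ℝ)) =
      monomial (Finsupp.equivFunOnFinite.symm fun _ => 1) 1 := by
    rw [monomial_eq, C_1, one_mul, Finsupp.prod]
    have hsupp : (Finsupp.equivFunOnFinite.symm fun _ : Fin m => (1:ℕ)).support = univ := by
      ext i; simp [Finsupp.mem_support_iff]
    rw [hsupp]
    exact (Finset.prod_congr rfl fun i _ => by simp).symm
  rw [hU, coeff_monomial]
  congr 1
  simp only [eq_iff_iff]
  constructor
  · intro h; rw [← h]; rfl
  · intro h
    rw [← h, Finsupp.equivFunOnFinite_symm_coe]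

private lemma coeff_linear_pow {m N : ℕ} (a : Fin m → ℝ) (α : Fin m →₀ ℕ)
    (hα : ∑ k, α k = N) :
    coeff α ((∑ k : Fin m, C (a k) * X k : MvPolynomial (Fin m) ℝ) ^ N)
      = (Nat.multinomial univ ⇑α : ℝ) * ∏ k, a k ^ α k := by
  rw [Finset.sum_pow_eq_sum_piAntidiag, coeff_sum]
  have hterm : ∀ k : Fin m → ℕ,
      coeff α ((Nat.multinomial univ k : MvPolynomial (Fin m) ℝ) * ∏ i, (C (a i) * X i) ^ k i)
        = if k = ⇑α then (Nat.multinomial univ k : ℝ) * ∏ i, a i ^ k i else 0 := by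
    intro k
    have h2 : (∏ i : Fin m, ((C (a i) * X i : MvPolynomial (Fin m) ℝ)) ^ k i)
        = C (∏ i, a i ^ k i) * monomial (Finsupp.equivFunOnFinite.symm k) 1 := by
      simp_rw [mul_pow, ← C_pow]
      rw [Finset.prod_mul_distrib, ← map_prod]
      congr 1
      rw [← prod_X_pow_eq_monomial]
      refine (Finset.prod_subset (subset_univ _) ?_).symm
      intro i _ hi
      have h0 : k i = 0 := by
        simpa [Finsupp.mem_support_iff, Finsupp.coe_equivFunOnFinite_symm] using hi
      simp [Finsupp.coe_equivFunOnFinite_symm, h0]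
    have hnat : ((Nat.multinomial univ k : MvPolynomial (Fin m) ℝ))
        = C ((Nat.multinomial univ k : ℝ)) := by rfl
    rw [h2, hnat, ← mul_assoc, ← C_mul, coeff_C_mul, coeff_monomial]
    by_cases hk : Finsupp.equivFunOnFinite.symm k = α
    · have : k = ⇑α := by rw [← hk]; rfl
      simp [hk, this, mul_comm]
    · have : ¬ (k = ⇑α) := by
        intro h; apply hk; rw [h, Finsupp.equivFunOnFinite_symm_coe]
      simp [hk, this]
  simp_rw [hterm]
  rw [Finset.sum_ite_eq' (univ.piAntidiag N) (⇑α)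
    (fun x => (Nat.multinomial univ x : ℝ) * ∏ i : Fin m, a i ^ x i)]
  rw [if_pos]
  rw [Finset.mem_piAntidiag]
  exact ⟨hα, fun i _ => mem_univ i⟩

private lemma moments {n r : ℕ} (c : Fin r → ℝ) (L : Fin r → Fin (n + 1) → ℝ)
    (hf : (∏ i : Fin (n + 1), (X i : MvPolynomial (Fin (n + 1)) ℝ)) =
          ∑ i : Fin r, C (c i) * (∑ k : Fin (n + 1), C (L i k) * X k) ^ (n + 1))
    (d : Fin (n + 1) → ℕ) (hd : ∑ k, d k = n + 1) :
    (Nat.multinomial univ d : ℝ) * ∑ i, c i * ∏ k, L i k ^ d k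
      = if d = (fun _ => 1) then 1 else 0 := by
  have h := congrArg (coeff (Finsupp.equivFunOnFinite.symm d)) hf
  rw [coeff_prod_X', coeff_sum] at h
  have hterm : ∀ i : Fin r,
      coeff (Finsupp.equivFunOnFinite.symm d)
        (C (c i) * (∑ k : Fin (n + 1), C (L i k) * X k) ^ (n + 1))
      = c i * ((Nat.multinomial univ d : ℝ) * ∏ k, L i k ^ d k) := by
    intro i
    rw [coeff_C_mul, coeff_linear_pow (L i) _ (by simpa using hd)]
    have hco : ⇑(Finsupp.equivFunOnFinite.symm d) = d := rfl
    rw [hco]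
  simp_rw [hterm] at h
  have hcoe : (⇑(Finsupp.equivFunOnFinite.symm d) = fun _ => 1) ↔ (d = fun _ => 1) := by
    constructor
    · intro hh; rw [← hh]; rfl
    · intro hh; funext k; simp [Finsupp.coe_equivFunOnFinite_symm, hh]
  have hms : (Nat.multinomial univ d : ℝ) * ∑ i, c i * ∏ k, L i k ^ d k
      = ∑ x : Fin r, c x * ((Nat.multinomial univ d : ℝ) * ∏ k, L x k ^ d k) := by
    rw [Finset.mul_sum]; exact Finset.sum_congr rfl fun i _ => by ring
  rw [hms, ← h]
  simp only [hcoe]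

private lemma part2 (n r : ℕ) (c : Fin r → ℝ) (L : Fin r → Fin (n + 1) → ℝ)
    (hf : (∏ i : Fin (n + 1), (X i : MvPolynomial (Fin (n + 1)) ℝ)) =
          ∑ i : Fin r, C (c i) * (∑ k : Fin (n + 1), C (L i k) * X k) ^ (n + 1)) :
    2 ^ n ≤ r := by
  by_contra hr
  push_neg at hr
  -- dependency among the 2^n multilinear evaluation vectors
  set b : Fin r → Fin n → ℝ := fun i k => L i k.succ / L i 0 with hbdef
  set v : (Fin n → Bool) → (Fin r → ℝ) := fun S i => ∏ k, (if S k then b i k else 1) with hvdef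
  have hdep : ¬ LinearIndependent ℝ v := by
    intro hli
    have hle := hli.fintype_card_le_finrank
    rw [Module.finrank_pi] at hle
    simp only [Fintype.card_fun, Fintype.card_bool, Fintype.card_fin] at hle
    omega
  rw [Fintype.not_linearIndependent_iff] at hdep
  obtain ⟨h, hsum, j₀, hj₀⟩ := hdep
  have hvan : ∀ i : Fin r, ∑ S : Fin n → Bool, h S * v S i = 0 := by
    intro i
    have := congrFun hsum i
    simpa [Finset.sum_apply] using this
  -- maximal support set
  have hne : (univ.filter fun S : Fin n → Bool => h S ≠ 0).Nonempty := ⟨j₀, by simp [hj₀]⟩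
  set w : (Fin n → Bool) → ℕ := fun S => (univ.filter fun k => S k = true).card with hwdef
  obtain ⟨S₀, hS₀mem, hS₀max⟩ := Finset.exists_max_image _ w hne
  have hS₀ : h S₀ ≠ 0 := by simpa using hS₀mem
  have hmax : ∀ S, h S ≠ 0 → w S ≤ w S₀ := fun S hS => hS₀max S (by simpa using hS)
  -- exponents
  set β : (Fin n → Bool) → Fin n → ℕ :=
    fun S k => (if S k then 1 else 0) + (if S₀ k then 0 else 1) with hβdef
  have hsumβ : ∀ S, ∑ k, β S k = w S + (n - w S₀) := by
    intro S
    rw [Finset.sum_add_distrib]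
    congr 1
    · simp [hβdef, hwdef, Finset.sum_boole]
    · have : ∀ k : Fin n, (if S₀ k then 0 else 1) = if ¬ (S₀ k = true) then 1 else 0 := by
        intro k; by_cases hk : S₀ k = true <;> simp [hk]
      rw [Finset.sum_congr rfl fun k _ => this k]
      rw [Finset.sum_boole]
      have hfc := Finset.card_filter_add_card_filter_not
        (s := (univ : Finset (Fin n))) (p := fun k => S₀ k = true)
      simp only [Fintype.card_fin, card_univ] at hfc
      have hwS₀ : w S₀ = (univ.filter fun k => S₀ k = true).card := rfl
      simp only [Nat.cast_id]
      omega
  have hwle : w S₀ ≤ n := by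
    simpa [hwdef] using Finset.card_filter_le (univ : Finset (Fin n)) (fun k => S₀ k = true)
  have hβle : ∀ S, h S ≠ 0 → ∑ k, β S k ≤ n := by
    intro S hS
    rw [hsumβ]
    have := hmax S hS
    have hwSle : w S ≤ n := by
      simpa [hwdef] using Finset.card_filter_le (univ : Finset (Fin n)) (fun k => S k = true)
    omega
  set d : (Fin n → Bool) → Fin (n + 1) → ℕ :=
    fun S => Fin.cons (n + 1 - ∑ k, β S k) (β S) with hddef
  have hdsum : ∀ S, h S ≠ 0 → ∑ k, d S k = n + 1 := by
    intro S hS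
    rw [hddef]
    rw [Fin.sum_cons]
    have := hβle S hS
    omega
  -- d S = 1 iff S = S₀
  have hβone : ∀ S, (β S = fun _ => 1) ↔ S = S₀ := by
    intro S
    constructor
    · intro hb
      funext k
      have := congrFun hb k
      by_cases h1 : S k = true <;> by_cases h2 : S₀ k = true <;>
        simp [hβdef, h1, h2] at this ⊢
    · intro hS
      funext k
      by_cases h2 : S₀ k = true <;> simp [hβdef, hS, h2]
  have hdone : ∀ S, (d S = fun _ => 1) ↔ S = S₀ := by
    intro S
    constructor
    · intro hd
      rw [← hβone]
      funext k
      have := congrFun hd k.succ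
      simpa [hddef] using this
    · intro hS
      have hb : β S = fun _ => 1 := (hβone S).mpr hS
      have hsb : ∑ k, β S k = n := by rw [hb]; simp
      funext k
      refine Fin.cases ?_ ?_ k
      · simp [hddef, hsb]
      · intro j
        simp [hddef, hb]
  -- weights
  set W : (Fin n → Bool) → ℝ := fun S => ∑ i, c i * ∏ k, L i k ^ d S k with hWdef
  have hmom : ∀ S, h S ≠ 0 →
      (Nat.multinomial univ (d S) : ℝ) * W S = if S = S₀ then 1 else 0 := by
    intro S hS
    rw [hWdef]
    rw [moments c L hf (d S) (hdsum S hS)]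
    simp [hdone S]
  -- Way 1: the full sum is nonzero
  have hW0 : W S₀ ≠ 0 := by
    intro h0
    have := hmom S₀ hS₀
    rw [h0, if_pos rfl] at this
    simp at this
  have hT1 : ∑ S : Fin n → Bool, h S * W S = h S₀ * W S₀ := by
    refine Finset.sum_eq_single S₀ ?_ (by intro hmem; exact absurd (mem_univ S₀) hmem)
    intro S _ hSne
    by_cases hS : h S = 0
    · rw [hS, zero_mul]
    · have := hmom S hS
      rw [if_neg hSne] at this
      have hmne : (Nat.multinomial univ (d S) : ℝ) ≠ 0 := by
        exact_mod_cast (Nat.multinomial_pos _ _).ne'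
      have : W S = 0 := by
        rcases mul_eq_zero.mp this with h' | h'
        · exact absurd h' hmne
        · exact h'
      rw [this, mul_zero]
  -- Way 2: the full sum is zero
  have key : ∀ S, ∀ i : Fin r, h S ≠ 0 →
      L i 0 ^ (n + 1 - ∑ k, β S k) * ∏ k, L i k.succ ^ β S k
        = L i 0 ^ (n + 1) * ((∏ k, (if S₀ k then 1 else b i k)) * v S i) := by
    intro S i hS
    have hsplitL : ∏ k, L i k.succ ^ β S k
        = (∏ k, (if S k then L i k.succ else 1)) * (∏ k, (if S₀ k then 1 else L i k.succ)) := by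
      rw [← Finset.prod_mul_distrib]
      refine Finset.prod_congr rfl fun k _ => ?_
      by_cases h1 : S k = true <;> by_cases h2 : S₀ k = true <;>
        simp [hβdef, h1, h2, pow_add, pow_two]
    by_cases hL : L i 0 = 0
    · have he : n + 1 - ∑ k, β S k ≠ 0 := by have := hβle S hS; omega
      rw [hL, zero_pow he, zero_pow (Nat.succ_ne_zero n), zero_mul, zero_mul]
    · have hP1 : ∏ k, (if S k then b i k else 1)
          = (∏ k, (if S k then L i k.succ else 1)) / L i 0 ^ w S := by
        have hstep : ∀ k : Fin n, (if S k then b i k else 1)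
            = (if S k then L i k.succ else 1) / (if S k then L i 0 else 1) := by
          intro k; by_cases h1 : S k = true <;> simp [h1, hbdef]
        rw [Finset.prod_congr rfl fun k _ => hstep k, Finset.prod_div_distrib]
        congr 1
        rw [Finset.prod_ite, Finset.prod_const, Finset.prod_const_one, mul_one, hwdef]
      have hP2 : ∏ k, (if S₀ k then 1 else b i k)
          = (∏ k, (if S₀ k then 1 else L i k.succ)) / L i 0 ^ (n - w S₀) := by
        have hstep : ∀ k : Fin n, (if S₀ k then 1 else b i k)
            = (if S₀ k then 1 else L i k.succ) / (if S₀ k then 1 else L i 0) := by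
          intro k; by_cases h2 : S₀ k = true <;> simp [h2, hbdef]
        rw [Finset.prod_congr rfl fun k _ => hstep k, Finset.prod_div_distrib]
        congr 1
        rw [Finset.prod_ite, Finset.prod_const, Finset.prod_const, one_pow, one_mul]
        congr 1
        have hfc := Finset.card_filter_add_card_filter_not
          (s := (univ : Finset (Fin n))) (p := fun k => S₀ k = true)
        simp only [card_univ, Fintype.card_fin] at hfc
        have hwS₀ : w S₀ = (univ.filter fun k => S₀ k = true).card := rfl
        omega
      have hsble : ∑ k, β S k ≤ n + 1 := le_trans (hβle S hS) (Nat.le_succ n)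
      have hv : v S i = ∏ k, (if S k then b i k else 1) := rfl
      rw [hsplitL, hv, hP1, hP2, pow_sub₀ _ hL hsble]
      have h1 : L i 0 ^ (∑ k, β S k) ≠ 0 := pow_ne_zero _ hL
      have h2 : L i 0 ^ w S ≠ 0 := pow_ne_zero _ hL
      have h3 : L i 0 ^ (n - w S₀) ≠ 0 := pow_ne_zero _ hL
      field_simp
      rw [hsumβ, pow_add]
      ring
  have hT2 : ∑ S : Fin n → Bool, h S * W S = 0 := by
    have hperterm : ∀ S, ∀ i : Fin r,
        h S * (c i * ∏ k, L i k ^ d S k)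
          = (c i * L i 0 ^ (n + 1) * ∏ k, (if S₀ k then 1 else b i k)) * (h S * v S i) := by
      intro S i
      by_cases hS : h S = 0
      · rw [hS]; ring
      · have hprod : ∏ k, L i k ^ d S k
            = L i 0 ^ (n + 1 - ∑ k, β S k) * ∏ k, L i k.succ ^ β S k := by
          rw [Fin.prod_univ_succ]
          simp [hddef]
        rw [hprod, key S i hS]
        ring
    calc ∑ S : Fin n → Bool, h S * W S
        = ∑ S : Fin n → Bool, ∑ i : Fin r,
            (c i * L i 0 ^ (n + 1) * ∏ k, (if S₀ k then 1 else b i k)) * (h S * v S i) := by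
          refine Finset.sum_congr rfl fun S _ => ?_
          rw [hWdef, Finset.mul_sum]
          exact Finset.sum_congr rfl fun i _ => hperterm S i
      _ = ∑ i : Fin r, (c i * L i 0 ^ (n + 1) * ∏ k, (if S₀ k then 1 else b i k))
            * ∑ S : Fin n → Bool, h S * v S i := by
          rw [Finset.sum_comm]
          exact Finset.sum_congr rfl fun i _ => by rw [Finset.mul_sum]
      _ = 0 := by
          refine Finset.sum_eq_zero fun i _ => ?_
          rw [hvan i, mul_zero]
  rw [hT1] at hT2
  exact (mul_ne_zero hS₀ hW0) hT2

private lemma all_one {n : ℕ} (α : Fin (n + 1) →₀ ℕ) (h1 : ∑ k, α k = n + 1)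
    (hodd : ∀ j : Fin n, Odd (α j.succ)) : ⇑α = fun _ => 1 := by
  have hpos : ∀ j : Fin n, 1 ≤ α j.succ := by
    intro j
    rcases hodd j with ⟨t, ht⟩
    omega
  have hsplit : α 0 + ∑ j : Fin n, α j.succ = n + 1 := by
    rw [← Fin.sum_univ_succ (fun k => α k)]
    exact h1
  have hsum2 : ∑ j : Fin n, α j.succ = (∑ j : Fin n, (α j.succ - 1)) + n := by
    have hc : ∀ j ∈ (univ : Finset (Fin n)), α j.succ = (α j.succ - 1) + 1 :=
      fun j _ => by have := hpos j; omega
    rw [Finset.sum_congr rfl hc, Finset.sum_add_distrib]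
    simp
  have heven : Even (∑ j : Fin n, (α j.succ - 1)) := by
    refine Finset.even_sum _ fun j _ => ?_
    rcases hodd j with ⟨t, ht⟩
    exact ⟨t, by omega⟩
  rcases heven with ⟨t, ht⟩
  have hE : ∑ j : Fin n, (α j.succ - 1) = 0 := by omega
  have hone : ∀ j : Fin n, α j.succ = 1 := by
    intro j
    have := Finset.sum_eq_zero_iff.mp hE j (mem_univ j)
    have := hpos j
    omega
  have hzero : α 0 = 1 := by
    rw [hsum2, hE] at hsplit; omega
  funext k
  refine Fin.cases ?_ ?_ k
  · exact hzero
  · exact hone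

private lemma part1 (n : ℕ) :
    (∏ i : Fin (n + 1), (X i : MvPolynomial (Fin (n + 1)) ℝ)) =
      C (1 / (2 ^ n * (Nat.factorial (n + 1) : ℝ))) *
        ∑ ε : Fin n → Bool,
          C (∏ j : Fin n, (if ε j then (1 : ℝ) else -1)) *
            (X 0 + ∑ j : Fin n, C (if ε j then (1 : ℝ) else -1) * X j.succ) ^ (n + 1) := by
  set sgn : Bool → ℝ := fun b => if b then 1 else -1 with hsgn
  set e : (Fin n → Bool) → Fin (n + 1) → ℝ :=
    fun ε => Fin.cons 1 (fun j => sgn (ε j)) with hedef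
  have hform : ∀ ε : Fin n → Bool,
      (X 0 + ∑ j : Fin n, C (if ε j then (1:ℝ) else -1) * X j.succ)
        = ∑ k : Fin (n + 1), C (e ε k) * X k := by
    intro ε
    rw [Fin.sum_univ_succ (fun k => C (e ε k) * X k)]
    simp [hedef, hsgn]
  apply MvPolynomial.ext
  intro α
  rw [coeff_prod_X', coeff_C_mul, coeff_sum]
  simp_rw [coeff_C_mul, hform]
  by_cases hdeg : ∑ k, α k = n + 1
  · -- degree matches
    simp_rw [fun ε : Fin n → Bool => coeff_linear_pow (e ε) α hdeg]
    have hprodsgn : ∀ ε : Fin n → Bool,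
        (∏ j, (if ε j then (1:ℝ) else -1)) * ((Nat.multinomial univ ⇑α : ℝ) * ∏ k, e ε k ^ α k)
          = (Nat.multinomial univ ⇑α : ℝ) * ∏ j, sgn (ε j) ^ (α j.succ + 1) := by
      intro ε
      have : ∏ k, e ε k ^ α k = ∏ j : Fin n, sgn (ε j) ^ α j.succ := by
        rw [Fin.prod_univ_succ (fun k => e ε k ^ α k)]
        simp [hedef]
      rw [this]
      have : (∏ j, (if ε j then (1:ℝ) else -1)) * ∏ j : Fin n, sgn (ε j) ^ α j.succ
          = ∏ j : Fin n, sgn (ε j) ^ (α j.succ + 1) := by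
        rw [← Finset.prod_mul_distrib]
        exact Finset.prod_congr rfl fun j _ => by rw [pow_succ, hsgn, mul_comm]
      rw [← this]; ring
    simp_rw [hprodsgn]
    rw [← Finset.mul_sum]
    have hfub : ∑ ε : Fin n → Bool, ∏ j : Fin n, sgn (ε j) ^ (α j.succ + 1)
        = ∏ j : Fin n, (1 + (-1 : ℝ) ^ (α j.succ + 1)) := by
      have hps := Finset.prod_univ_sum (fun _ : Fin n => (univ : Finset Bool))
        (fun j y => sgn y ^ (α j.succ + 1))
      rw [Fintype.piFinset_univ] at hps
      rw [← hps]
      refine Finset.prod_congr rfl fun j _ => ?_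
      simp [hsgn]
    rw [hfub]
    by_cases hα1 : ⇑α = fun _ => 1
    · have hmul : Nat.multinomial univ ⇑α = (n + 1).factorial := by
        have hspec := Nat.multinomial_spec univ ⇑α
        simp only [hα1] at hspec
        rw [hα1]
        simpa using hspec
      have hA : ∀ j : Fin n, α j.succ = 1 := fun j => congrFun hα1 j.succ
      have hprod2 : ∏ j : Fin n, (1 + (-1 : ℝ) ^ (α j.succ + 1)) = 2 ^ n := by
        have hc : ∀ j ∈ (univ : Finset (Fin n)), (1 + (-1 : ℝ) ^ (α j.succ + 1)) = 2 := by
          intro j _; rw [hA j]; norm_num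
        rw [Finset.prod_congr rfl hc, Finset.prod_const]
        norm_num
      rw [if_pos hα1, hmul, hprod2]
      have h2 : (2 : ℝ) ^ n ≠ 0 := by positivity
      have h3 : ((n + 1).factorial : ℝ) ≠ 0 := by positivity
      field_simp
    · have hex : ∃ j : Fin n, Even (α j.succ) := by
        by_contra hno
        push_neg at hno
        exact hα1 (all_one α hdeg fun j => Nat.not_even_iff_odd.mp (hno j))
      rcases hex with ⟨j, hj⟩
      have : (1 + (-1 : ℝ) ^ (α j.succ + 1)) = 0 := by
        rw [Odd.neg_one_pow (by rcases hj with ⟨t, ht⟩; exact ⟨t, by omega⟩)]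
        ring
      rw [Finset.prod_eq_zero (mem_univ j) this]
      rw [if_neg hα1]
      ring
  · -- degree mismatch: both sides vanish
    have hhom : ∀ ε : Fin n → Bool,
        ((∑ k : Fin (n + 1), C (e ε k) * X k) ^ (n + 1) :
          MvPolynomial (Fin (n + 1)) ℝ).IsHomogeneous (n + 1) := by
      intro ε
      have hbase : ((∑ k : Fin (n + 1), C (e ε k) * X k) :
          MvPolynomial (Fin (n + 1)) ℝ).IsHomogeneous 1 :=
        IsHomogeneous.sum _ _ _ fun k _ => isHomogeneous_C_mul_X _ _
      simpa using hbase.pow (n + 1)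
    have hdeg' : α.degree = ∑ k, α k :=
      Finset.sum_subset (subset_univ _) fun i _ hi => by
        simpa [Finsupp.mem_support_iff] using hi
    have hvanish : ∀ ε : Fin n → Bool,
        coeff α ((∑ k : Fin (n + 1), C (e ε k) * X k) ^ (n + 1) :
          MvPolynomial (Fin (n + 1)) ℝ) = 0 := by
      intro ε
      exact (hhom ε).coeff_eq_zero (by rw [hdeg']; exact hdeg)
    simp_rw [hvanish]
    have hα1 : ¬ (⇑α = fun _ => 1) := by
      intro h
      apply hdeg
      rw [h]; simp
    rw [if_neg hα1]
    simp

/-- the Waring rank of the monomial `x₁⋯x_N` (with `N = n+1`) is `2^{N−1}`: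
it equals `(1/(2^{N−1} N!)) ∑_{ε∈{±1}^{N−1}} (∏ε_j)(x₁ + ε₁x₂ + ⋯ + ε_{N−1}x_N)^N`, and
no decomposition into fewer `N`-th powers of linear forms exists. -/
theorem waring_rank_monomial (n : ℕ) :
    ((∏ i : Fin (n + 1), (X i : MvPolynomial (Fin (n + 1)) ℝ)) =
      C (1 / (2 ^ n * (Nat.factorial (n + 1) : ℝ))) *
        ∑ ε : Fin n → Bool,
          C (∏ j : Fin n, (if ε j then (1 : ℝ) else -1)) *
            (X 0 + ∑ j : Fin n, C (if ε j then (1 : ℝ) else -1) * X j.succ) ^ (n + 1))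
    ∧ ∀ (r : ℕ) (c : Fin r → ℝ) (L : Fin r → Fin (n + 1) → ℝ),
        ((∏ i : Fin (n + 1), (X i : MvPolynomial (Fin (n + 1)) ℝ)) =
          ∑ i : Fin r, C (c i) * (∑ k : Fin (n + 1), C (L i k) * X k) ^ (n + 1)) →
        2 ^ n ≤ r := by
  exact ⟨part1 n, fun r c L hf => part2 n r c L hf⟩
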